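/- Define the cycle index Z_n of the symmetric group S_n (with respect to its natural action on Fin n) as the multivariate polynomial with rational coefficients Z_n := (1/n!) · ∑_{σ ∈ S_n} ∏_{i=1}^n t_i^{j_i(σ)}, where (j_i(σ))_i is the cycle type of σ. Then Z_0 = 1 and, for all n > 0, Z_n = (1/n) · ∑_{i=1}^n t_i · Z_{n−i}. -/

import Mathlib

open Equiv Function Finset
open Fin.NatCast

/-- `cycleCount σ i` is the number of `i`-cycles in the disjoint cycle decomposition of the
permutation `σ` (fixed points counted as `1`-cycles). -/
noncomputable def cycleCount {X : Type*} (σ : Equiv.Perm X) (i : ℕ) : ℕ :=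
  Nat.card {a : X // Function.minimalPeriod (⇑σ) a = i} / i

private lemma isPeriodicPt_map' {α β : Type*} {u : α → β} {f : α → α} {g : β → β}
    (hu : Function.Injective u) (hc : ∀ x, g (u x) = u (f x)) (a : α) (n : ℕ) :
    IsPeriodicPt g n (u a) ↔ IsPeriodicPt f n a := by
  have key : ∀ k x, g^[k] (u x) = u (f^[k] x) := by
    intro k
    induction k with
    | zero => simp
    | succ k ih => intro x; rw [iterate_succ_apply, iterate_succ_apply, hc, ih]
  unfold IsPeriodicPt IsFixedPt
  rw [key, hu.eq_iff]

private lemma minimalPeriod_map' {α β : Type*} {u : α → β} {f : α → α} {g : β → β}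
    (hu : Function.Injective u) (hc : ∀ x, g (u x) = u (f x)) (a : α) :
    minimalPeriod g (u a) = minimalPeriod f a :=
  minimalPeriod_eq_minimalPeriod_iff.2 fun n => isPeriodicPt_map' hu hc a n

private lemma finRotate_iterate {m : ℕ} (j : ℕ) (x : Fin (m+1)) :
    (⇑(finRotate (m+1)))^[j] x = x + (j : Fin (m+1)) := by
  induction j with
  | zero => simp
  | succ j ih =>
    rw [iterate_succ_apply', ih, finRotate_succ_apply]
    push_cast
    simp only [Nat.cast_succ, add_assoc]

private lemma minimalPeriod_finRotate {i : ℕ} (hi : 0 < i) (k : Fin i) :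
    minimalPeriod (⇑(finRotate i)) k = i := by
  obtain ⟨m, rfl⟩ : ∃ m, i = m + 1 := ⟨i - 1, (Nat.succ_pred_eq_of_pos hi).symm⟩
  have hp : ∀ j : ℕ, IsPeriodicPt (⇑(finRotate (m+1))) j k ↔ (m+1) ∣ j := by
    intro j
    unfold IsPeriodicPt IsFixedPt
    rw [finRotate_iterate, add_eq_left, Fin.natCast_eq_zero]
  exact Nat.dvd_antisymm
    (isPeriodicPt_iff_minimalPeriod_dvd.1 ((hp (m+1)).2 dvd_rfl))
    ((hp _).1 (isPeriodicPt_minimalPeriod _ _))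

private lemma minimalPeriod_permCongr {α β : Type*} (e : α ≃ β) (σ : Equiv.Perm α) (a : α) :
    minimalPeriod (⇑(e.permCongr σ)) (e a) = minimalPeriod (⇑σ) a :=
  minimalPeriod_map' e.injective (fun x => by simp) a

private lemma cycleCount_permCongr {α β : Type*} (e : α ≃ β) (σ : Equiv.Perm α) (j : ℕ) :
    cycleCount (e.permCongr σ) j = cycleCount σ j := by
  unfold cycleCount
  congr 1
  exact Nat.card_congr (e.subtypeEquiv fun a => by
    rw [minimalPeriod_permCongr]).symm

private lemma cycleCount_eq_zero {X : Type*} [Fintype X] (σ : Equiv.Perm X) {j : ℕ}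
    (hj : Fintype.card X < j) : cycleCount σ j = 0 := by
  unfold cycleCount
  apply Nat.div_eq_of_lt
  calc Nat.card {a : X // minimalPeriod (⇑σ) a = j} ≤ Nat.card X :=
        Nat.card_le_card_of_injective _ Subtype.val_injective
    _ < j := by rwa [Nat.card_eq_fintype_card]

private lemma minimalPeriod_subtypeCongr_left {ε : Type*} {p : ε → Prop} [DecidablePred p]
    (ep : Equiv.Perm {a // p a}) (en : Equiv.Perm {a // ¬p a}) (x : {a // p a}) :
    minimalPeriod (⇑(ep.subtypeCongr en)) (x : ε) = minimalPeriod (⇑ep) x :=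
  minimalPeriod_map' Subtype.val_injective
    (fun y => Equiv.Perm.subtypeCongr.left_apply_subtype ep en y) x

private lemma minimalPeriod_subtypeCongr_right {ε : Type*} {p : ε → Prop} [DecidablePred p]
    (ep : Equiv.Perm {a // p a}) (en : Equiv.Perm {a // ¬p a}) (x : {a // ¬p a}) :
    minimalPeriod (⇑(ep.subtypeCongr en)) (x : ε) = minimalPeriod (⇑en) x :=
  minimalPeriod_map' Subtype.val_injective
    (fun y => Equiv.Perm.subtypeCongr.right_apply_subtype ep en y) x

private lemma card_periodSet_subtypeCongr {ε : Type*} [Fintype ε] {p : ε → Prop} [DecidablePred p]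
    (ep : Equiv.Perm {a // p a}) (en : Equiv.Perm {a // ¬p a}) (j : ℕ) :
    Nat.card {x : ε // minimalPeriod (⇑(ep.subtypeCongr en)) x = j}
      = Nat.card {x : {a // p a} // minimalPeriod (⇑ep) x = j}
        + Nat.card {x : {a // ¬p a} // minimalPeriod (⇑en) x = j} := by
  classical
  rw [← Nat.card_sum]
  apply Nat.card_congr
  have e1 : {x : ε // minimalPeriod (⇑(ep.subtypeCongr en)) x = j} ≃
      {s : {a // p a} ⊕ {a // ¬p a} //
        minimalPeriod (⇑(ep.subtypeCongr en)) (Equiv.sumCompl p s) = j} :=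
    ((Equiv.sumCompl p).subtypeEquiv (fun s => Iff.rfl)).symm
  refine e1.trans (Equiv.subtypeSum.trans (Equiv.sumCongr
    (Equiv.subtypeEquivRight fun x => ?_) (Equiv.subtypeEquivRight fun x => ?_)))
  · rw [Equiv.sumCompl_apply_inl, minimalPeriod_subtypeCongr_left]
  · rw [Equiv.sumCompl_apply_inr, minimalPeriod_subtypeCongr_right]

section glue
variable {n i : ℕ}

private noncomputable def glue (f : Fin i ↪ Fin n)
    (τ : Equiv.Perm {x : Fin n // ¬ x ∈ Set.range ⇑f}) : Equiv.Perm (Fin n) :=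
  letI : DecidablePred (· ∈ Set.range ⇑f) := fun x => Classical.propDecidable _
  Equiv.Perm.subtypeCongr ((Equiv.ofInjective ⇑f f.injective).permCongr (finRotate i)) τ

variable (f : Fin i ↪ Fin n) (τ : Equiv.Perm {x : Fin n // ¬ x ∈ Set.range ⇑f})

private lemma glue_apply_mem (k : Fin i) : glue f τ (f k) = f (finRotate i k) := by
  letI : DecidablePred (· ∈ Set.range ⇑f) := fun x => Classical.propDecidable _
  have h : (f k : Fin n) ∈ Set.range ⇑f := ⟨k, rfl⟩
  rw [glue, Equiv.Perm.subtypeCongr.left_apply _ _ h]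
  have : (⟨f k, h⟩ : {x : Fin n // x ∈ Set.range ⇑f}) = Equiv.ofInjective ⇑f f.injective k := rfl
  rw [this, Equiv.permCongr_apply, Equiv.symm_apply_apply]
  rfl

private lemma glue_apply_not_mem {x : Fin n} (h : ¬ x ∈ Set.range ⇑f) :
    glue f τ x = ↑(τ ⟨x, h⟩) := by
  letI : DecidablePred (· ∈ Set.range ⇑f) := fun x => Classical.propDecidable _
  rw [glue, Equiv.Perm.subtypeCongr.right_apply _ _ h]

private lemma minimalPeriod_glue_mem (hi : 0 < i) (k : Fin i) :
    minimalPeriod (⇑(glue f τ)) (f k) = i := by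
  letI : DecidablePred (· ∈ Set.range ⇑f) := fun x => Classical.propDecidable _
  have h : (f k : Fin n) ∈ Set.range ⇑f := ⟨k, rfl⟩
  have h1 : (f k : Fin n) = ((⟨f k, h⟩ : {x : Fin n // x ∈ Set.range ⇑f}) : Fin n) := rfl
  rw [glue, h1, minimalPeriod_subtypeCongr_left]
  have h2 : (⟨f k, h⟩ : {x : Fin n // x ∈ Set.range ⇑f}) = Equiv.ofInjective ⇑f f.injective k := rfl
  rw [h2, minimalPeriod_permCongr, minimalPeriod_finRotate hi]

private lemma cycleCount_glue (hi : 0 < i) (j : ℕ) :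
    cycleCount (glue f τ) j = cycleCount τ j + (if j = i then 1 else 0) := by
  letI : DecidablePred (· ∈ Set.range ⇑f) := fun x => Classical.propDecidable _
  have hcard : Nat.card {x : Fin n // minimalPeriod (⇑(glue f τ)) x = j}
      = (if j = i then i else 0) + Nat.card {x // minimalPeriod (⇑τ) x = j} := by
    rw [glue, card_periodSet_subtypeCongr]
    congr 1
    have hall : ∀ y : {x : Fin n // x ∈ Set.range ⇑f},
        minimalPeriod (⇑((Equiv.ofInjective ⇑f f.injective).permCongr (finRotate i))) y = i := by
      intro y
      have : y = Equiv.ofInjective ⇑f f.injective ((Equiv.ofInjective ⇑f f.injective).symm y) :=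
        (Equiv.apply_symm_apply _ _).symm
      rw [this, minimalPeriod_permCongr, minimalPeriod_finRotate hi]
    split_ifs with hji
    · have : Nat.card {x : {x : Fin n // x ∈ Set.range ⇑f} //
          minimalPeriod (⇑((Equiv.ofInjective ⇑f f.injective).permCongr (finRotate i))) x = j}
          = Nat.card {x : Fin n // x ∈ Set.range ⇑f} :=
        Nat.card_congr (Equiv.subtypeUnivEquiv (fun y => (hall y).trans hji.symm))
      rw [this, Nat.card_congr (Equiv.ofInjective ⇑f f.injective).symm, Nat.card_eq_fintype_card,
        Fintype.card_fin]
    · have : IsEmpty {x : {x : Fin n // x ∈ Set.range ⇑f} //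
          minimalPeriod (⇑((Equiv.ofInjective ⇑f f.injective).permCongr (finRotate i))) x = j} :=
        ⟨fun y => hji ((hall y.1).symm.trans y.2).symm⟩
      exact Nat.card_of_isEmpty
  unfold cycleCount
  rw [hcard]
  split_ifs with hji
  · subst hji
    rw [Nat.add_comm, Nat.add_div_right _ hi]
  · rw [Nat.zero_add, Nat.add_zero]

private lemma glue_iterate (k : ℕ) (m : Fin i) :
    (⇑(glue f τ))^[k] (f m) = f ((⇑(finRotate i))^[k] m) := by
  induction k with
  | zero => simp
  | succ k ih =>
    rw [iterate_succ_apply', ih, glue_apply_mem]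
    rw [iterate_succ_apply' (⇑(finRotate i)) k m]

private lemma glue_pt (hi : 0 < i) (k : Fin i) :
    (⇑(glue f τ))^[(k : ℕ)] (f ⟨0, hi⟩) = f k := by
  rw [glue_iterate]
  congr 1
  obtain ⟨m, rfl⟩ : ∃ m, i = m + 1 := ⟨i - 1, (Nat.succ_pred_eq_of_pos hi).symm⟩
  have h0 : (⟨0, hi⟩ : Fin (m+1)) = 0 := rfl
  rw [finRotate_iterate, h0, zero_add, Fin.cast_val_eq_self]

private lemma glue_inj (hi : 0 < i) {f₁ f₂ : Fin i ↪ Fin n}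
    {τ₁ : Equiv.Perm {x : Fin n // ¬ x ∈ Set.range ⇑f₁}}
    {τ₂ : Equiv.Perm {x : Fin n // ¬ x ∈ Set.range ⇑f₂}}
    (hσ : glue f₁ τ₁ = glue f₂ τ₂) (ha : f₁ ⟨0, hi⟩ = f₂ ⟨0, hi⟩) :
    (⟨f₁, τ₁⟩ : Σ f : Fin i ↪ Fin n, Equiv.Perm {x : Fin n // ¬ x ∈ Set.range ⇑f}) =
      ⟨f₂, τ₂⟩ := by
  have hf : f₁ = f₂ := by
    apply Function.Embedding.ext
    intro k
    rw [← glue_pt f₁ τ₁ hi k, ← glue_pt f₂ τ₂ hi k, hσ, ha]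
  subst hf
  have hτ : τ₁ = τ₂ := by
    apply Equiv.ext
    intro y
    apply Subtype.ext
    have h1 : (↑(τ₁ y) : Fin n) = glue f₁ τ₁ ↑y := by
      rw [glue_apply_not_mem f₁ τ₁ y.2]
    have h2 : (↑(τ₂ y) : Fin n) = glue f₁ τ₂ ↑y := by
      rw [glue_apply_not_mem f₁ τ₂ y.2]
    rw [h1, h2, hσ]
  rw [hτ]

private lemma glue_surj (hi : 0 < i) (σ : Equiv.Perm (Fin n)) (a : Fin n)
    (hmin : minimalPeriod (⇑σ) a = i) :
    ∃ (f : Fin i ↪ Fin n) (τ : Equiv.Perm {x : Fin n // ¬ x ∈ Set.range ⇑f}),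
      glue f τ = σ ∧ f ⟨0, hi⟩ = a := by
  have hper : (⇑σ)^[i] a = a := by
    have := isPeriodicPt_minimalPeriod (⇑σ) a
    rwa [hmin] at this
  have hfinj : Function.Injective (fun k : Fin i => (⇑σ)^[(k : ℕ)] a) := by
    intro k₁ k₂ h
    exact Fin.ext (iterate_injOn_Iio_minimalPeriod (by rw [hmin]; exact k₁.2)
      (by rw [hmin]; exact k₂.2) h)
  set f : Fin i ↪ Fin n := ⟨fun k => (⇑σ)^[(k : ℕ)] a, hfinj⟩ with hfdef
  have hmod : ∀ k : ℕ, (⇑σ)^[k % i] a = (⇑σ)^[k] a := by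
    intro k
    rw [← hmin, iterate_mod_minimalPeriod_eq]
  have hstab : ∀ x : Fin n, x ∈ Set.range ⇑f ↔ σ x ∈ Set.range ⇑f := by
    intro x
    constructor
    · rintro ⟨k, rfl⟩
      refine ⟨⟨((k : ℕ) + 1) % i, Nat.mod_lt _ hi⟩, ?_⟩
      show (⇑σ)^[((k : ℕ) + 1) % i] a = σ ((⇑σ)^[(k : ℕ)] a)
      rw [hmod]
      exact iterate_succ_apply' (⇑σ) (k : ℕ) a
    · rintro ⟨k, hk⟩
      rcases Nat.eq_zero_or_pos (k : ℕ) with h0 | h0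
      · refine ⟨⟨i - 1, by omega⟩, ?_⟩
        apply σ.injective
        show σ ((⇑σ)^[i - 1] a) = σ x
        rw [hk.symm]
        show σ ((⇑σ)^[i-1] a) = (⇑σ)^[(k : ℕ)] a
        have he : σ ((⇑σ)^[i-1] a) = (⇑σ)^[i-1+1] a := (iterate_succ_apply' (⇑σ) (i-1) a).symm
        rw [h0, he, Nat.sub_add_cancel hi]
        exact hper
      · refine ⟨⟨(k : ℕ) - 1, by omega⟩, ?_⟩
        apply σ.injective
        show σ ((⇑σ)^[(k:ℕ) - 1] a) = σ x
        rw [hk.symm]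
        show σ ((⇑σ)^[(k:ℕ)-1] a) = (⇑σ)^[(k : ℕ)] a
        conv_rhs => rw [← Nat.sub_add_cancel h0]
        exact (iterate_succ_apply' (⇑σ) ((k:ℕ)-1) a).symm
  have hstab' : ∀ x : Fin n, ¬ x ∈ Set.range ⇑f ↔ ¬ σ x ∈ Set.range ⇑f :=
    fun x => not_congr (hstab x)
  refine ⟨f, σ.subtypePerm (fun x => (hstab' x).symm), ?_, rfl⟩
  apply Equiv.ext
  intro x
  by_cases hx : x ∈ Set.range ⇑f
  · obtain ⟨k, rfl⟩ := hx
    rw [glue_apply_mem]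
    show f (finRotate i k) = σ ((⇑σ)^[(k : ℕ)] a)
    rw [show σ ((⇑σ)^[(k : ℕ)] a) = (⇑σ)^[(k : ℕ) + 1] a from
      (iterate_succ_apply' (⇑σ) (k : ℕ) a).symm]
    show (⇑σ)^[((finRotate i k : Fin i) : ℕ)] a = (⇑σ)^[(k : ℕ) + 1] a
    rw [← hmod ((k : ℕ) + 1)]
    congr 1
    obtain ⟨m, rfl⟩ : ∃ m, i = m + 1 := ⟨i - 1, (Nat.succ_pred_eq_of_pos hi).symm⟩
    rw [finRotate_succ_apply, Fin.val_add, Fin.val_one', Nat.add_mod_mod]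
  · rw [glue_apply_not_mem f _ hx]
    rfl

end glue

/-- The unnormalized cycle index sum. -/
private noncomputable def SS (n : ℕ) : MvPolynomial ℕ ℚ :=
  ∑ σ : Equiv.Perm (Fin n), ∏ j ∈ Finset.Icc 1 n, MvPolynomial.X j ^ cycleCount σ j

private lemma mono_glue {n i : ℕ} (h1 : 1 ≤ i) (hn : i ≤ n) (f : Fin i ↪ Fin n)
    (τ : Equiv.Perm {x : Fin n // ¬ x ∈ Set.range ⇑f}) :
    ∏ j ∈ Finset.Icc 1 n, (MvPolynomial.X j : MvPolynomial ℕ ℚ) ^ cycleCount (glue f τ) j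
      = MvPolynomial.X i * ∏ j ∈ Finset.Icc 1 n, MvPolynomial.X j ^ cycleCount τ j := by
  have hstep : ∀ j ∈ Finset.Icc 1 n,
      (MvPolynomial.X j : MvPolynomial ℕ ℚ) ^ cycleCount (glue f τ) j
        = (if j = i then (MvPolynomial.X i : MvPolynomial ℕ ℚ) else 1)
          * MvPolynomial.X j ^ cycleCount τ j := by
    intro j _
    rw [cycleCount_glue f τ h1, pow_add, mul_comm]
    congr 1
    split_ifs with hji
    · subst hji; rw [pow_one]
    · rw [pow_zero]
  rw [Finset.prod_congr rfl hstep, Finset.prod_mul_distrib, Finset.prod_ite_eq',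
    if_pos (Finset.mem_Icc.mpr ⟨h1, hn⟩)]

private lemma key {n : ℕ} (i : ℕ) (h1 : 1 ≤ i) (hn : i ≤ n) :
    ∑ p ∈ Finset.univ.filter
        (fun p : Equiv.Perm (Fin n) × Fin n => minimalPeriod (⇑p.1) p.2 = i),
      ∏ j ∈ Finset.Icc 1 n, (MvPolynomial.X j : MvPolynomial ℕ ℚ) ^ cycleCount p.1 j
    = (n.descFactorial i) • (MvPolynomial.X i * SS (n - i)) := by
  classical
  have hinner : ∀ f : Fin i ↪ Fin n,
      (∑ τ : Equiv.Perm {x : Fin n // ¬ x ∈ Set.range ⇑f},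
        ∏ j ∈ Finset.Icc 1 n, (MvPolynomial.X j : MvPolynomial ℕ ℚ) ^ cycleCount τ j)
      = SS (n - i) := by
    intro f
    have hcard : Fintype.card {x : Fin n // ¬ x ∈ Set.range ⇑f} = n - i := by
      rw [Fintype.card_subtype_compl]
      congr 1
      · exact Fintype.card_fin n
      · rw [Set.card_range_of_injective f.injective, Fintype.card_fin]
    obtain e := Fintype.equivFinOfCardEq hcard
    rw [SS]
    refine Fintype.sum_equiv e.permCongr _ _ (fun τ => ?_)
    simp only [cycleCount_permCongr]
    refine (Finset.prod_subset (Finset.Icc_subset_Icc_right (Nat.sub_le n i)) ?_).symm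
    intro j hj hnj
    have hlt : n - i < j := by
      rw [Finset.mem_Icc] at hj hnj
      omega
    rw [cycleCount_eq_zero τ (by rw [hcard]; exact hlt), pow_zero]
  have hbij : ∑ q : (Σ f : Fin i ↪ Fin n, Equiv.Perm {x : Fin n // ¬ x ∈ Set.range ⇑f}),
        (MvPolynomial.X i * ∏ j ∈ Finset.Icc 1 n,
          (MvPolynomial.X j : MvPolynomial ℕ ℚ) ^ cycleCount q.2 j)
      = ∑ p ∈ Finset.univ.filter
          (fun p : Equiv.Perm (Fin n) × Fin n => minimalPeriod (⇑p.1) p.2 = i),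
        ∏ j ∈ Finset.Icc 1 n, (MvPolynomial.X j : MvPolynomial ℕ ℚ) ^ cycleCount p.1 j := by
    refine Finset.sum_bij (fun q _ => (glue q.1 q.2, q.1 ⟨0, h1⟩)) ?_ ?_ ?_ ?_
    · intro q _
      rw [Finset.mem_filter]
      exact ⟨Finset.mem_univ _, minimalPeriod_glue_mem q.1 q.2 h1 ⟨0, h1⟩⟩
    · intro q₁ _ q₂ _ h
      rw [Prod.mk.injEq] at h
      obtain ⟨q₁f, q₁τ⟩ := q₁
      obtain ⟨q₂f, q₂τ⟩ := q₂
      exact glue_inj h1 h.1 h.2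
    · intro p hp
      rw [Finset.mem_filter] at hp
      obtain ⟨f, τ, hglue, hpt⟩ := glue_surj h1 p.1 p.2 hp.2
      exact ⟨⟨f, τ⟩, Finset.mem_univ _, Prod.ext hglue hpt⟩
    · intro q _
      exact (mono_glue h1 hn q.1 q.2).symm
  rw [← hbij, ← Finset.univ_sigma_univ, Finset.sum_sigma]
  have hc : ∀ f : Fin i ↪ Fin n,
      (∑ τ : Equiv.Perm {x : Fin n // ¬ x ∈ Set.range ⇑f},
        (MvPolynomial.X i * ∏ j ∈ Finset.Icc 1 n,
          (MvPolynomial.X j : MvPolynomial ℕ ℚ) ^ cycleCount τ j))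
      = MvPolynomial.X i * SS (n - i) := by
    intro f
    rw [← Finset.mul_sum, hinner]
  rw [Finset.sum_congr rfl (fun f _ => hc f), Finset.sum_const, Finset.card_univ,
    Fintype.card_embedding_eq, Fintype.card_fin, Fintype.card_fin]

private lemma minimalPeriod_mem_Icc {n : ℕ} (σ : Equiv.Perm (Fin n)) (x : Fin n) (hn : 0 < n) :
    minimalPeriod (⇑σ) x ∈ Finset.Icc 1 n := by
  have h1 : IsPeriodicPt (⇑σ) (orderOf σ) x := by
    show (⇑σ)^[orderOf σ] x = x
    have : (⇑σ)^[orderOf σ] = ⇑(σ ^ orderOf σ) := rfl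
    rw [this, pow_orderOf_eq_one]
    rfl
  have hpos := h1.minimalPeriod_pos (orderOf_pos σ)
  have hinj : Function.Injective
      (fun k : Fin (minimalPeriod (⇑σ) x) => (⇑σ)^[(k : ℕ)] x) := by
    intro k₁ k₂ h
    exact Fin.ext (iterate_injOn_Iio_minimalPeriod k₁.2 k₂.2 h)
  have hle := Fintype.card_le_of_injective _ hinj
  rw [Fintype.card_fin, Fintype.card_fin] at hle
  exact Finset.mem_Icc.mpr ⟨hpos, hle⟩

private lemma pair_sum {n : ℕ} (hn : 0 < n) :
    (n • SS n : MvPolynomial ℕ ℚ)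
      = ∑ i ∈ Finset.Icc 1 n, (n.descFactorial i) • (MvPolynomial.X i * SS (n - i)) := by
  classical
  calc (n • SS n : MvPolynomial ℕ ℚ)
      = ∑ p : Equiv.Perm (Fin n) × Fin n,
          ∏ j ∈ Finset.Icc 1 n, (MvPolynomial.X j : MvPolynomial ℕ ℚ) ^ cycleCount p.1 j := by
        rw [Fintype.sum_prod_type, SS, Finset.smul_sum]
        refine Finset.sum_congr rfl (fun σ _ => ?_)
        symm
        change ∑ _y : Fin n, (∏ j ∈ Finset.Icc 1 n,
          (MvPolynomial.X j : MvPolynomial ℕ ℚ) ^ cycleCount σ j) = _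
        rw [Finset.sum_const, Finset.card_univ, Fintype.card_fin]
    _ = ∑ i ∈ Finset.Icc 1 n, ∑ p ∈ Finset.univ.filter
          (fun p : Equiv.Perm (Fin n) × Fin n => minimalPeriod (⇑p.1) p.2 = i),
          ∏ j ∈ Finset.Icc 1 n, (MvPolynomial.X j : MvPolynomial ℕ ℚ) ^ cycleCount p.1 j :=
        (Finset.sum_fiberwise_of_maps_to
          (fun p _ => minimalPeriod_mem_Icc p.1 p.2 hn) _).symm
    _ = _ := Finset.sum_congr rfl (fun i hi =>
        key i (Finset.mem_Icc.1 hi).1 (Finset.mem_Icc.1 hi).2)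

/-- The cycle index `Zₙ = (1/n!) ∑_{σ ∈ Sₙ} ∏_{i=1}^n tᵢ^{jᵢ(σ)}` of the symmetric group
`Sₙ` with respect to its natural action on `Fin n`, as a polynomial in the variables
`tᵢ` (indexed by `i : ℕ`) with rational coefficients. -/
noncomputable def cycleIndex (n : ℕ) : MvPolynomial ℕ ℚ :=
  MvPolynomial.C (1 / (Nat.factorial n : ℚ)) *
    ∑ σ : Equiv.Perm (Fin n), ∏ i ∈ Finset.Icc 1 n, MvPolynomial.X i ^ cycleCount σ i

private lemma cycleIndex_eq (n : ℕ) :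
    cycleIndex n = MvPolynomial.C (1 / (Nat.factorial n : ℚ)) * SS n := rfl

/-- Pletsch's recursion: `Z₀ = 1` and `Zₙ = (1/n) ∑_{i=1}^n tᵢ Z_{n-i}` for `n > 0`. -/
theorem cycleIndex_recursion :
    cycleIndex 0 = 1 ∧
      ∀ n : ℕ, 0 < n →
        cycleIndex n =
          MvPolynomial.C (1 / (n : ℚ)) *
            ∑ i ∈ Finset.Icc 1 n, MvPolynomial.X i * cycleIndex (n - i) := by
  constructor
  · rw [cycleIndex_eq, SS, show Finset.Icc 1 0 = (∅ : Finset ℕ) from rfl]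
    simp
  · intro n hn
    have hn0 : (n : ℚ) ≠ 0 := Nat.cast_ne_zero.mpr hn.ne'
    have hC : MvPolynomial.C (n : ℚ) * SS n
        = ∑ i ∈ Finset.Icc 1 n,
            MvPolynomial.C ((n.descFactorial i : ℚ)) * (MvPolynomial.X i * SS (n - i)) := by
      have h := pair_sum hn
      calc MvPolynomial.C (n : ℚ) * SS n = n • SS n := by
            rw [map_natCast, ← nsmul_eq_mul]
        _ = ∑ i ∈ Finset.Icc 1 n, (n.descFactorial i) • (MvPolynomial.X i * SS (n - i)) := h
        _ = _ := Finset.sum_congr rfl (fun i _ => by rw [map_natCast, ← nsmul_eq_mul])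
    refine mul_left_cancel₀
      (show (MvPolynomial.C (n : ℚ) : MvPolynomial ℕ ℚ) ≠ 0 from by simp [hn.ne']) ?_
    rw [← mul_assoc, ← map_mul, mul_one_div_cancel hn0, map_one, one_mul]
    rw [cycleIndex_eq, ← mul_assoc,
      mul_comm (MvPolynomial.C (n : ℚ)) (MvPolynomial.C (1 / (n.factorial : ℚ))), mul_assoc,
      hC, Finset.mul_sum]
    refine Finset.sum_congr rfl (fun i hi => ?_)
    obtain ⟨hi1, hi2⟩ := Finset.mem_Icc.1 hi
    have hfac : ((n - i).factorial : ℚ) * (n.descFactorial i : ℚ) = (n.factorial : ℚ) := by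
      exact_mod_cast congrArg (Nat.cast : ℕ → ℚ) (Nat.factorial_mul_descFactorial hi2)
    have hm0 : ((n - i).factorial : ℚ) ≠ 0 := Nat.cast_ne_zero.mpr (Nat.factorial_ne_zero _)
    have hnf0 : (n.factorial : ℚ) ≠ 0 := Nat.cast_ne_zero.mpr (Nat.factorial_ne_zero _)
    have harith : (1 / (n.factorial : ℚ)) * (n.descFactorial i : ℚ)
        = 1 / ((n - i).factorial : ℚ) := by
      rw [div_mul_eq_mul_div, one_mul, div_eq_div_iff hnf0 hm0, one_mul,
        mul_comm ((n.descFactorial i : ℚ)) _, hfac]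
    have hcc : (MvPolynomial.C (1 / (n.factorial : ℚ)) : MvPolynomial ℕ ℚ)
        * MvPolynomial.C ((n.descFactorial i : ℚ)) = MvPolynomial.C (1 / ((n - i).factorial : ℚ)) := by
      rw [← map_mul, harith]
    rw [cycleIndex_eq (n - i), ← mul_assoc, hcc]
    ring
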